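/- Let n ≥ 4 and let SD be the semidihedral group of order 2^n (the semidirect product (ZMod (2^(n-1))) ⋊ (ZMod 2) with action by multiplication by 2^(n-2) - 1). The subgroup of SD generated by all elements of order 2 has index 2 in SD, and is isomorphic to the dihedral group of order 2^(n-1). -/

import Mathlib

section Aux

variable (n : ℕ)

lemma pow_eq' (hn : 4 ≤ n) : 2 ^ (n - 1) = 2 * 2 ^ (n - 2) := by
  have h : n - 1 = (n - 2) + 1 := by omega
  rw [h, pow_succ, mul_comm]

instance : NeZero (2 ^ (n - 1)) := ⟨pow_ne_zero _ two_ne_zero⟩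
instance : NeZero (2 ^ (n - 2)) := ⟨pow_ne_zero _ two_ne_zero⟩

lemma val_cast_eq (a : ZMod (2 ^ (n - 1))) : ((a.val : ℕ) : ZMod (2 ^ (n - 1))) = a := by
  rw [ZMod.natCast_val, ZMod.cast_id]

variable (hn : 4 ≤ n)

noncomputable def pr : ZMod (2 ^ (n - 1)) →+* ZMod 2 :=
  ZMod.castHom ⟨2 ^ (n - 2), pow_eq' n hn⟩ (ZMod 2)

lemma pr_natCast (k : ℕ) : pr n hn (k : ZMod (2 ^ (n - 1))) = (k : ZMod 2) := by
  simp [pr]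

lemma pr_val (a : ZMod (2 ^ (n - 1))) : pr n hn a = (a.val : ZMod 2) := by
  conv_lhs => rw [← val_cast_eq n a]
  rw [pr_natCast]

lemma pr_eq_zero_iff (a : ZMod (2 ^ (n - 1))) : pr n hn a = 0 ↔ 2 ∣ a.val := by
  rw [pr_val, ZMod.natCast_eq_zero_iff]

lemma cast_pow_sub_one :
    ((2 ^ (n - 2) - 1 : ℕ) : ZMod (2 ^ (n - 1))) = ((2 ^ (n - 2) : ℕ) : ZMod (2 ^ (n - 1))) - 1 := by
  have h : (1 : ℕ) ≤ 2 ^ (n - 2) := Nat.one_le_two_pow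
  push_cast [Nat.cast_sub h]
  ring

lemma mulSubOne (a : ZMod (2 ^ (n - 1)))
    (h : ((2 ^ (n - 2) : ℕ) : ZMod (2 ^ (n - 1))) * a = 0) :
    ((2 ^ (n - 2) - 1 : ℕ) : ZMod (2 ^ (n - 1))) * a = -a := by
  rw [cast_pow_sub_one, sub_mul, one_mul, h, zero_sub]

lemma pow_mul_eq_zero (hn : 4 ≤ n) (a : ZMod (2 ^ (n - 1))) (h : 2 ∣ a.val) :
    ((2 ^ (n - 2) : ℕ) : ZMod (2 ^ (n - 1))) * a = 0 := by
  obtain ⟨c, hc⟩ := h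
  rw [← val_cast_eq n a, hc, ← Nat.cast_mul, ZMod.natCast_eq_zero_iff, pow_eq' n hn]
  exact ⟨c, by ring⟩

lemma pow_mul_eq_zero_iff (hn : 4 ≤ n) (a : ZMod (2 ^ (n - 1))) :
    ((2 ^ (n - 2) : ℕ) : ZMod (2 ^ (n - 1))) * a = 0 ↔ 2 ∣ a.val := by
  refine ⟨fun h => ?_, pow_mul_eq_zero n hn a⟩
  conv_lhs at h => rw [← val_cast_eq n a]
  rw [← Nat.cast_mul, ZMod.natCast_eq_zero_iff] at h
  have hpos : 0 < 2 ^ (n - 2) := Nat.pow_pos (by norm_num)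
  obtain ⟨c, hc⟩ := h
  have key : 2 ^ (n - 2) * a.val = 2 ^ (n - 2) * (2 * c) := by
    rw [hc, pow_eq' n hn]; ring
  exact ⟨c, Nat.eq_of_mul_eq_mul_left hpos key⟩

end Aux

section Grp

variable (n : ℕ)
  (φ : Multiplicative (ZMod 2) →* MulAut (Multiplicative (ZMod (2 ^ (n - 1)))))

lemma two_cases : ∀ b : Multiplicative (ZMod 2), b = 1 ∨ b = Multiplicative.ofAdd 1 := by decide

lemma odd_cast (hn : 4 ≤ n) : ((2 ^ (n - 2) - 1 : ℕ) : ZMod 2) = 1 := by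
  have h3 : 2 ^ (n - 2) = 2 * 2 ^ (n - 3) := by
    have h : n - 2 = (n - 3) + 1 := by omega
    rw [h, pow_succ, mul_comm]
  have h1 : (1 : ℕ) ≤ 2 ^ (n - 3) := Nat.one_le_two_pow
  have h2 : 2 ^ (n - 2) - 1 = 2 * (2 ^ (n - 3) - 1) + 1 := by omega
  rw [h2]
  push_cast
  rw [show (2 : ZMod 2) = 0 by decide]
  ring

lemma pr_φ (hn : 4 ≤ n)
    (hφ : ∀ a : ZMod (2 ^ (n - 1)),
      φ (Multiplicative.ofAdd (1 : ZMod 2)) (Multiplicative.ofAdd a) =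
        Multiplicative.ofAdd (((2 ^ (n - 2) - 1 : ℕ) : ZMod (2 ^ (n - 1))) * a))
    (b : Multiplicative (ZMod 2)) (m : Multiplicative (ZMod (2 ^ (n - 1)))) :
    pr n hn (Multiplicative.toAdd (φ b m)) = pr n hn (Multiplicative.toAdd m) := by
  rcases two_cases b with rfl | rfl
  · rw [map_one φ]; rfl
  · have h := hφ (Multiplicative.toAdd m)
    rw [ofAdd_toAdd] at h
    rw [h, toAdd_ofAdd, map_mul, pr_natCast, odd_cast n hn, one_mul]

noncomputable def p (hn : 4 ≤ n)
    (hφ : ∀ a : ZMod (2 ^ (n - 1)),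
      φ (Multiplicative.ofAdd (1 : ZMod 2)) (Multiplicative.ofAdd a) =
        Multiplicative.ofAdd (((2 ^ (n - 2) - 1 : ℕ) : ZMod (2 ^ (n - 1))) * a)) :
    (Multiplicative (ZMod (2 ^ (n - 1))) ⋊[φ] Multiplicative (ZMod 2)) →*
    Multiplicative (ZMod 2) where
  toFun g := Multiplicative.ofAdd (pr n hn (Multiplicative.toAdd g.left))
  map_one' := by simp
  map_mul' a b := by
    rw [SemidirectProduct.mul_left, toAdd_mul, map_add, pr_φ n φ hn hφ, ← ofAdd_add]

end Grp

section Grp2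

variable (n : ℕ)
  (φ : Multiplicative (ZMod 2) →* MulAut (Multiplicative (ZMod (2 ^ (n - 1)))))
  (hn : 4 ≤ n)
  (hφ : ∀ a : ZMod (2 ^ (n - 1)),
    φ (Multiplicative.ofAdd (1 : ZMod 2)) (Multiplicative.ofAdd a) =
      Multiplicative.ofAdd (((2 ^ (n - 2) - 1 : ℕ) : ZMod (2 ^ (n - 1))) * a))

lemma p_surj : Function.Surjective (p n φ hn hφ) := by
  intro y
  rcases two_cases y with rfl | rfl
  · exact ⟨1, map_one _⟩
  · refine ⟨⟨Multiplicative.ofAdd 1, 1⟩, ?_⟩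
    show Multiplicative.ofAdd (pr n hn (Multiplicative.toAdd (Multiplicative.ofAdd
      (1 : ZMod (2 ^ (n - 1)))))) = _
    rw [toAdd_ofAdd, map_one]

lemma ker_index : (p n φ hn hφ).ker.index = 2 := by
  rw [Subgroup.index_ker, MonoidHom.range_eq_top_of_surjective _ (p_surj n φ hn hφ)]
  rw [Subgroup.card_top, Nat.card_eq_fintype_card]
  simp [ZMod.card]

end Grp2

section Grp3

variable (n : ℕ)
  (φ : Multiplicative (ZMod 2) →* MulAut (Multiplicative (ZMod (2 ^ (n - 1)))))
  (hn : 4 ≤ n)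
  (hφ : ∀ a : ZMod (2 ^ (n - 1)),
    φ (Multiplicative.ofAdd (1 : ZMod 2)) (Multiplicative.ofAdd a) =
      Multiplicative.ofAdd (((2 ^ (n - 2) - 1 : ℕ) : ZMod (2 ^ (n - 1))) * a))

include hn in
lemma two_mul_zero (x : ZMod (2 ^ (n - 1))) (h : 2 * x = 0) :
    ((2 ^ (n - 2) : ℕ) : ZMod (2 ^ (n - 1))) * x = 0 := by
  have h3 : (2 : ℕ) ^ (n - 2) = 2 ^ (n - 3) * 2 := by
    have h' : n - 2 = (n - 3) + 1 := by omega
    rw [h', pow_succ]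
  rw [h3]
  push_cast
  rw [mul_assoc, h, mul_zero]

include hφ in
lemma φ_apply (m : Multiplicative (ZMod (2 ^ (n - 1)))) :
    φ (Multiplicative.ofAdd (1 : ZMod 2)) m =
      Multiplicative.ofAdd (((2 ^ (n - 2) - 1 : ℕ) : ZMod (2 ^ (n - 1))) *
        Multiplicative.toAdd m) := by
  have h := hφ (Multiplicative.toAdd m)
  rwa [ofAdd_toAdd] at h

include hn hφ in
lemma sq_mem (a : Multiplicative (ZMod (2 ^ (n - 1))))
    (ha : 2 ∣ (Multiplicative.toAdd a).val) :
    (⟨a, Multiplicative.ofAdd 1⟩ : Multiplicative (ZMod (2 ^ (n - 1))) ⋊[φ]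
      Multiplicative (ZMod 2)) ∈
    {g : Multiplicative (ZMod (2 ^ (n - 1))) ⋊[φ] Multiplicative (ZMod 2) | g ≠ 1 ∧ g ^ 2 = 1} := by
  constructor
  · intro h
    have h2 := congrArg SemidirectProduct.right h
    simp only [SemidirectProduct.one_right] at h2
    exact absurd h2 (by decide)
  · rw [pow_two, SemidirectProduct.mul_def]
    have hl : a * φ (Multiplicative.ofAdd (1 : ZMod 2)) a = 1 := by
      rw [φ_apply n φ hφ, mulSubOne n _ (pow_mul_eq_zero n hn _ ha),
        ofAdd_neg, ofAdd_toAdd, mul_inv_cancel]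
    have hr : Multiplicative.ofAdd (1 : ZMod 2) * Multiplicative.ofAdd 1 = 1 := by decide
    exact SemidirectProduct.ext hl hr

include hn hφ in
lemma closure_eq :
    Subgroup.closure {g : Multiplicative (ZMod (2 ^ (n - 1))) ⋊[φ]
        Multiplicative (ZMod 2) | g ≠ 1 ∧ g ^ 2 = 1} = (p n φ hn hφ).ker := by
  apply le_antisymm
  · rw [Subgroup.closure_le]
    rintro ⟨a, b⟩ ⟨hne, hsq⟩
    rw [SetLike.mem_coe, MonoidHom.mem_ker]
    show Multiplicative.ofAdd (pr n hn (Multiplicative.toAdd a)) = 1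
    rw [pow_two] at hsq
    have hleft := congrArg SemidirectProduct.left hsq
    rw [SemidirectProduct.mul_left, SemidirectProduct.one_left] at hleft
    rw [ofAdd_eq_one, pr_eq_zero_iff, ← pow_mul_eq_zero_iff n hn]
    rcases two_cases b with rfl | rfl
    · rw [map_one φ, MulAut.one_apply] at hleft
      have h2 : 2 * Multiplicative.toAdd a = 0 := by
        have h3 := congrArg Multiplicative.toAdd hleft
        rw [toAdd_mul, toAdd_one] at h3
        linear_combination h3
      exact two_mul_zero n hn _ h2
    · rw [φ_apply n φ hφ] at hleft
      have h3 := congrArg Multiplicative.toAdd hleft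
      rw [toAdd_mul, toAdd_ofAdd, toAdd_one, cast_pow_sub_one n] at h3
      linear_combination h3
  · rintro ⟨a, b⟩ hmem
    rw [MonoidHom.mem_ker] at hmem
    have hpar : 2 ∣ (Multiplicative.toAdd a).val := by
      rw [← pr_eq_zero_iff n hn, ← ofAdd_eq_one]
      exact hmem
    have hone : 2 ∣ (Multiplicative.toAdd (1 : Multiplicative (ZMod (2 ^ (n - 1))))).val := by
      rw [toAdd_one, ZMod.val_zero]
      exact Dvd.intro 0 rfl
    rcases two_cases b with rfl | rfl
    · have hprod : (⟨a, (1 : Multiplicative (ZMod 2))⟩ : Multiplicative (ZMod (2 ^ (n - 1))) ⋊[φ]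
          Multiplicative (ZMod 2)) =
          ⟨a, Multiplicative.ofAdd 1⟩ * ⟨1, Multiplicative.ofAdd 1⟩ := by
        rw [SemidirectProduct.mul_def]
        congr 1
        · show a = a * (φ (Multiplicative.ofAdd (1 : ZMod 2))) 1
          rw [map_one, mul_one]
        · show (1 : Multiplicative (ZMod 2)) = Multiplicative.ofAdd 1 * Multiplicative.ofAdd 1
          decide
      rw [hprod]
      exact mul_mem (Subgroup.subset_closure (sq_mem n φ hn hφ a hpar))
        (Subgroup.subset_closure (sq_mem n φ hn hφ 1 hone))
    · exact Subgroup.subset_closure (sq_mem n φ hn hφ a hpar)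

end Grp3

section Grp4

variable (n : ℕ)
  (φ : Multiplicative (ZMod 2) →* MulAut (Multiplicative (ZMod (2 ^ (n - 1)))))
  (hn : 4 ≤ n)
  (hφ : ∀ a : ZMod (2 ^ (n - 1)),
    φ (Multiplicative.ofAdd (1 : ZMod 2)) (Multiplicative.ofAdd a) =
      Multiplicative.ofAdd (((2 ^ (n - 2) - 1 : ℕ) : ZMod (2 ^ (n - 1))) * a))

lemma val_cast_eq2 {m : ℕ} [NeZero m] (a : ZMod m) : ((a.val : ℕ) : ZMod m) = a := by
  rw [ZMod.natCast_val, ZMod.cast_id]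

include hn in
/-- the doubling map `ZMod (2^(n-2)) →+ ZMod (2^(n-1))` -/
noncomputable def g2 : ZMod (2 ^ (n - 2)) →+ ZMod (2 ^ (n - 1)) :=
  ZMod.lift (2 ^ (n - 2))
    ⟨AddMonoidHom.mk' (fun x : ℤ => ((2 * x : ℤ) : ZMod (2 ^ (n - 1))))
      (fun x y => by push_cast; ring), by
        have key : ((2 * 2 ^ (n - 2) : ℕ) : ZMod (2 ^ (n - 1))) = 0 := by
          rw [← pow_eq' n hn]; exact ZMod.natCast_self _
        show ((2 * ((2 ^ (n - 2) : ℕ) : ℤ) : ℤ) : ZMod (2 ^ (n - 1))) = 0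
        exact_mod_cast key⟩

lemma g2_natCast (k : ℕ) :
    g2 n hn ((k : ℕ) : ZMod (2 ^ (n - 2))) = ((2 * k : ℕ) : ZMod (2 ^ (n - 1))) := by
  have h : ((k : ℕ) : ZMod (2 ^ (n - 2))) = ((k : ℤ) : ZMod (2 ^ (n - 2))) := by push_cast; rfl
  rw [h, g2, ZMod.lift_coe]
  show ((2 * (k : ℤ) : ℤ) : ZMod (2 ^ (n - 1))) = _
  push_cast
  ring

lemma g2_val (i : ZMod (2 ^ (n - 2))) :
    g2 n hn i = ((2 * i.val : ℕ) : ZMod (2 ^ (n - 1))) := by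
  conv_lhs => rw [← val_cast_eq2 i]
  rw [g2_natCast]

lemma g2_inj : Function.Injective (g2 n hn) := by
  rw [injective_iff_map_eq_zero]
  intro i hi
  rw [g2_val n hn, ZMod.natCast_eq_zero_iff, pow_eq' n hn] at hi
  obtain ⟨c, hc⟩ := hi
  have hpos : 0 < (2 : ℕ) := by norm_num
  have h2 : i.val = 2 ^ (n - 2) * c := by
    apply Nat.eq_of_mul_eq_mul_left hpos
    rw [hc]; ring
  have hlt : i.val < 2 ^ (n - 2) := ZMod.val_lt i
  rcases Nat.eq_zero_or_pos c with rfl | hcpos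
  · have : i.val = 0 := by omega
    rwa [← ZMod.val_eq_zero]
  · exfalso
    have : 2 ^ (n - 2) * 1 ≤ 2 ^ (n - 2) * c := Nat.mul_le_mul_left _ hcpos
    omega

lemma g2_even (i : ZMod (2 ^ (n - 2))) : 2 ∣ (g2 n hn i).val := by
  rw [g2_val n hn, ZMod.val_natCast]
  rw [Nat.dvd_mod_iff ⟨2 ^ (n - 2), pow_eq' n hn⟩]
  exact ⟨i.val, rfl⟩

lemma g2_kill (i : ZMod (2 ^ (n - 2))) :
    ((2 ^ (n - 2) : ℕ) : ZMod (2 ^ (n - 1))) * g2 n hn i = 0 := by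
  rw [g2_val n hn, ← Nat.cast_mul, ZMod.natCast_eq_zero_iff, pow_eq' n hn]
  exact ⟨i.val, by ring⟩

end Grp4

section Grp5

variable (n : ℕ)
  (φ : Multiplicative (ZMod 2) →* MulAut (Multiplicative (ZMod (2 ^ (n - 1)))))
  (hn : 4 ≤ n)
  (hφ : ∀ a : ZMod (2 ^ (n - 1)),
    φ (Multiplicative.ofAdd (1 : ZMod 2)) (Multiplicative.ofAdd a) =
      Multiplicative.ofAdd (((2 ^ (n - 2) - 1 : ℕ) : ZMod (2 ^ (n - 1))) * a))

include hφ in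
lemma φx (t : ZMod (2 ^ (n - 1))) (ht : ((2 ^ (n - 2) : ℕ) : ZMod (2 ^ (n - 1))) * t = 0) :
    φ (Multiplicative.ofAdd (1 : ZMod 2)) (Multiplicative.ofAdd t) =
      Multiplicative.ofAdd (-t) := by
  rw [hφ, mulSubOne n _ ht]

/-- The embedding of the dihedral group into the semidihedral group. -/
noncomputable def fD : DihedralGroup (2 ^ (n - 2)) →*
    (Multiplicative (ZMod (2 ^ (n - 1))) ⋊[φ] Multiplicative (ZMod 2)) :=
  MonoidHom.mk' (fun d => match d with
    | DihedralGroup.r i => ⟨Multiplicative.ofAdd (g2 n hn i), 1⟩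
    | DihedralGroup.sr i => ⟨Multiplicative.ofAdd (-(g2 n hn i)), Multiplicative.ofAdd 1⟩)
    (by
      intro x y
      rcases x with i | i <;> rcases y with j | j
      · rw [DihedralGroup.r_mul_r]
        refine SemidirectProduct.ext ?_ ?_
        · show Multiplicative.ofAdd (g2 n hn (i + j)) =
            Multiplicative.ofAdd (g2 n hn i) * φ 1 (Multiplicative.ofAdd (g2 n hn j))
          rw [map_one φ, MulAut.one_apply, ← ofAdd_add, map_add]
        · show (1 : Multiplicative (ZMod 2)) = 1 * 1
          rw [mul_one]
      · rw [DihedralGroup.r_mul_sr]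
        refine SemidirectProduct.ext ?_ ?_
        · show Multiplicative.ofAdd (-(g2 n hn (j - i))) =
            Multiplicative.ofAdd (g2 n hn i) * φ 1 (Multiplicative.ofAdd (-(g2 n hn j)))
          rw [map_one φ, MulAut.one_apply, ← ofAdd_add, map_sub]
          ring_nf
        · show Multiplicative.ofAdd (1 : ZMod 2) = 1 * Multiplicative.ofAdd 1
          rw [one_mul]
      · rw [DihedralGroup.sr_mul_r]
        refine SemidirectProduct.ext ?_ ?_
        · show Multiplicative.ofAdd (-(g2 n hn (i + j))) =
            Multiplicative.ofAdd (-(g2 n hn i)) *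
              φ (Multiplicative.ofAdd 1) (Multiplicative.ofAdd (g2 n hn j))
          rw [φx n φ hφ _ (g2_kill n hn j), ← ofAdd_add, map_add]
          ring_nf
        · show Multiplicative.ofAdd (1 : ZMod 2) = Multiplicative.ofAdd 1 * 1
          rw [mul_one]
      · rw [DihedralGroup.sr_mul_sr]
        refine SemidirectProduct.ext ?_ ?_
        · show Multiplicative.ofAdd (g2 n hn (j - i)) =
            Multiplicative.ofAdd (-(g2 n hn i)) *
              φ (Multiplicative.ofAdd 1) (Multiplicative.ofAdd (-(g2 n hn j)))
          have hk : ((2 ^ (n - 2) : ℕ) : ZMod (2 ^ (n - 1))) * (-(g2 n hn j)) = 0 := by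
            rw [mul_neg, g2_kill n hn j, neg_zero]
          rw [φx n φ hφ _ hk, ← ofAdd_add, map_sub, neg_neg]
          ring_nf
        · show (1 : Multiplicative (ZMod 2)) = Multiplicative.ofAdd 1 * Multiplicative.ofAdd 1
          decide)

lemma fD_r (i : ZMod (2 ^ (n - 2))) :
    fD n φ hn hφ (DihedralGroup.r i) = ⟨Multiplicative.ofAdd (g2 n hn i), 1⟩ := rfl

lemma fD_sr (i : ZMod (2 ^ (n - 2))) :
    fD n φ hn hφ (DihedralGroup.sr i) =
      ⟨Multiplicative.ofAdd (-(g2 n hn i)), Multiplicative.ofAdd 1⟩ := rfl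

lemma fD_inj : Function.Injective (fD n φ hn hφ) := by
  intro u v h
  rcases u with i | i <;> rcases v with j | j
  · rw [fD_r, fD_r] at h
    have hl := congrArg (fun g => Multiplicative.toAdd
      (SemidirectProduct.left g)) h
    simp only [toAdd_ofAdd] at hl
    rw [g2_inj n hn hl]
  · have hr : (1 : Multiplicative (ZMod 2)) = Multiplicative.ofAdd 1 :=
      congrArg SemidirectProduct.right h
    exact absurd hr (by decide)
  · have hr : (Multiplicative.ofAdd 1 : Multiplicative (ZMod 2)) = 1 :=
      congrArg SemidirectProduct.right h
    exact absurd hr (by decide)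
  · rw [fD_sr, fD_sr] at h
    have hl := congrArg (fun g => Multiplicative.toAdd
      (SemidirectProduct.left g)) h
    simp only [toAdd_ofAdd, neg_inj] at hl
    rw [g2_inj n hn hl]

lemma fD_mem_ker (d : DihedralGroup (2 ^ (n - 2))) :
    fD n φ hn hφ d ∈ (p n φ hn hφ).ker := by
  rw [MonoidHom.mem_ker]
  rcases d with i | i
  · show Multiplicative.ofAdd (pr n hn (Multiplicative.toAdd
      (Multiplicative.ofAdd (g2 n hn i)))) = 1
    rw [toAdd_ofAdd, ofAdd_eq_one, pr_eq_zero_iff]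
    exact g2_even n hn i
  · show Multiplicative.ofAdd (pr n hn (Multiplicative.toAdd
      (Multiplicative.ofAdd (-(g2 n hn i))))) = 1
    rw [toAdd_ofAdd, ofAdd_eq_one, map_neg, neg_eq_zero, pr_eq_zero_iff]
    exact g2_even n hn i

def sdpEquiv : (Multiplicative (ZMod (2 ^ (n - 1))) ⋊[φ] Multiplicative (ZMod 2)) ≃
    (Multiplicative (ZMod (2 ^ (n - 1))) × Multiplicative (ZMod 2)) where
  toFun g := (g.left, g.right)
  invFun q := ⟨q.1, q.2⟩
  left_inv g := rfl
  right_inv q := rfl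

lemma card_G : Nat.card (Multiplicative (ZMod (2 ^ (n - 1))) ⋊[φ] Multiplicative (ZMod 2)) =
    2 ^ (n - 1) * 2 := by
  rw [Nat.card_congr (sdpEquiv n φ), Nat.card_prod,
    Nat.card_congr Multiplicative.toAdd, Nat.card_congr Multiplicative.toAdd,
    Nat.card_zmod, Nat.card_zmod]

instance : Finite (Multiplicative (ZMod (2 ^ (n - 1))) ⋊[φ] Multiplicative (ZMod 2)) :=
  Finite.of_equiv _ (sdpEquiv n φ).symm

lemma card_ker : Nat.card (p n φ hn hφ).ker = 2 ^ (n - 1) := by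
  have h := Subgroup.card_mul_index (p n φ hn hφ).ker
  rw [ker_index n φ hn hφ, card_G n φ] at h
  exact Nat.eq_of_mul_eq_mul_right (by norm_num) h

include hn in
lemma card_D : Nat.card (DihedralGroup (2 ^ (n - 2))) = 2 ^ (n - 1) := by
  rw [DihedralGroup.nat_card, ← pow_eq' n hn]

noncomputable def theEquiv : (p n φ hn hφ).ker ≃* DihedralGroup (2 ^ (n - 2)) := by
  refine (MulEquiv.ofBijective
    ((fD n φ hn hφ).codRestrict (p n φ hn hφ).ker (fD_mem_ker n φ hn hφ)) ?_).symm
  rw [Nat.bijective_iff_injective_and_card]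
  constructor
  · intro a b h
    exact fD_inj n φ hn hφ (congrArg Subtype.val h)
  · rw [card_D n hn, card_ker n φ hn hφ]

end Grp5


/-- For `n ≥ 4`, in the semidihedral group of order `2^n` (the semidirect product
`(ZMod (2^(n-1))) ⋊ (ZMod 2)` with the nontrivial element acting by
multiplication by `2^(n-2) - 1`), the subgroup generated by all elements of
order 2 has index 2, and is isomorphic to the dihedral group of order `2^(n-1)`. -/
theorem semidihedral_involution_subgroup (n : ℕ) (hn : 4 ≤ n)
    (φ : Multiplicative (ZMod 2) →* MulAut (Multiplicative (ZMod (2 ^ (n - 1)))))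
    (hφ : ∀ a : ZMod (2 ^ (n - 1)),
      φ (Multiplicative.ofAdd (1 : ZMod 2)) (Multiplicative.ofAdd a) =
        Multiplicative.ofAdd (((2 ^ (n - 2) - 1 : ℕ) : ZMod (2 ^ (n - 1))) * a)) :
    (Subgroup.closure {g : Multiplicative (ZMod (2 ^ (n - 1))) ⋊[φ]
        Multiplicative (ZMod 2) | g ≠ 1 ∧ g ^ 2 = 1}).index = 2 ∧
    Nonempty ((Subgroup.closure {g : Multiplicative (ZMod (2 ^ (n - 1))) ⋊[φ]
        Multiplicative (ZMod 2) | g ≠ 1 ∧ g ^ 2 = 1}) ≃*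
      DihedralGroup (2 ^ (n - 2))) := by
  rw [closure_eq n φ hn hφ]
  exact ⟨ker_index n φ hn hφ, ⟨theEquiv n φ hn hφ⟩⟩
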